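/- Let g be a finite-dimensional real Lie algebra, X ∈ g, and suppose there exists a Lie algebra automorphism φ : g → g and a real number c with |c| > 1 such that φ(X) = c • X. Then the linear map ad(X) : g → g is nilpotent. -/
import Mathlib

open Polynomial Matrix

private lemma coeff_comp_C_mul_X {R : Type*} [CommRing R] (p : R[X]) (c : R) (i : ℕ) :
    (p.comp (C c * X)).coeff i = c ^ i * p.coeff i := by
  rw [comp_eq_sum_left, Polynomial.sum, finset_sum_coeff]
  have e : ∀ k, (C (p.coeff k) * (C c * X) ^ k).coeff i
      = if i = k then c ^ i * p.coeff i else 0 := by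
    intro k
    rw [mul_pow, ← C_pow, ← mul_assoc, ← C_mul, coeff_C_mul, coeff_X_pow]
    by_cases h : i = k
    · subst h; simp [mul_comm]
    · simp [h, Ne.symm h]
  simp only [e]
  rw [Finset.sum_ite_eq p.support i fun _ => c ^ i * p.coeff i]
  split_ifs with h
  · rfl
  · rw [Polynomial.notMem_support_iff.mp h, mul_zero]

private lemma charpoly_smul_comp {ι : Type*} [Fintype ι] [DecidableEq ι]
    (A : Matrix ι ι ℝ) (c : ℝ) :
    ((c • A).charpoly).comp (C c * X) = c ^ (Fintype.card ι) • A.charpoly := by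
  let ψ : ℝ[X] →+* ℝ[X] := (aeval (C c * X)).toRingHom
  have hψ : ∀ p : ℝ[X], ψ p = p.comp (C c * X) := by
    intro p
    simp [ψ, aeval_def, eval₂_eq_eval_map, Polynomial.comp]
  have hmap : (charmatrix (c • A)).map ψ = c • charmatrix A := by
    ext i j
    rw [Matrix.map_apply, Matrix.smul_apply]
    by_cases h : i = j
    · subst h
      rw [charmatrix_apply_eq, charmatrix_apply_eq, hψ, sub_comp, X_comp, C_comp,
        Matrix.smul_apply, smul_eq_mul, smul_sub, smul_eq_C_mul, smul_eq_C_mul, C_mul]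
    · rw [charmatrix_apply_ne _ _ _ h, charmatrix_apply_ne _ _ _ h, hψ, neg_comp, C_comp,
        Matrix.smul_apply, smul_eq_mul, smul_neg, smul_eq_C_mul, C_mul]
  have h1 : ((c • A).charpoly).comp (C c * X) = ψ ((charmatrix (c • A)).det) := by
    rw [Matrix.charpoly, hψ]
  have hC : c • charmatrix A = (C c : ℝ[X]) • charmatrix A := by
    ext i j
    simp [Matrix.smul_apply, smul_eq_C_mul, smul_eq_mul]
  rw [h1, RingHom.map_det, RingHom.mapMatrix_apply, hmap, hC, det_smul, Matrix.charpoly,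
    smul_eq_C_mul, ← C_pow]

/-- If `X` in a finite-dimensional real Lie algebra is renormalized by an automorphism,
i.e. `φ X = c • X` with `|c| > 1`, then `ad X` is nilpotent. -/
theorem stmt1 {g : Type*} [LieRing g] [LieAlgebra ℝ g] [FiniteDimensional ℝ g]
    (X : g) (φ : g ≃ₗ⁅ℝ⁆ g) (c : ℝ) (hc : 1 < |c|) (hφ : φ X = c • X) :
    IsNilpotent (LieAlgebra.ad ℝ g X) := by
  classical
  set f := LieAlgebra.ad ℝ g X with hf
  -- conjugation identity : φ ∘ f ∘ φ⁻¹ = c • f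
  have key : φ.toLinearEquiv.conj f = c • f := by
    ext y
    have hlie : φ ⁅X, φ.symm y⁆ = c • ⁅X, y⁆ := by
      rw [LieEquiv.map_lie, hφ, LieEquiv.apply_symm_apply, smul_lie]
    simp only [LinearEquiv.conj_apply, LinearMap.coe_comp, Function.comp_apply,
      LinearMap.smul_apply, hf, LieAlgebra.ad_apply, LinearEquiv.coe_coe]
    exact hlie
  have h1 : LinearMap.charpoly (c • f) = LinearMap.charpoly f := by
    rw [← key, LinearEquiv.charpoly_conj]
  set n := Module.finrank ℝ g with hn
  -- transfer to matrices
  set b := Module.Free.chooseBasis ℝ g with hb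
  have hcard : Fintype.card (Module.Free.ChooseBasisIndex ℝ g) = n := by
    rw [hn, Module.finrank_eq_card_chooseBasisIndex]
  have hsm : LinearMap.toMatrix b b (c • f) = c • LinearMap.toMatrix b b f :=
    _root_.map_smul (LinearMap.toMatrix b b) c f
  have h2 : (LinearMap.charpoly (c • f)).comp (Polynomial.C c * Polynomial.X)
      = c ^ n • LinearMap.charpoly f := by
    rw [← LinearMap.charpoly_toMatrix (c • f) b, ← LinearMap.charpoly_toMatrix f b, hsm,
      charpoly_smul_comp, hcard]
  rw [h1] at h2
  set p := LinearMap.charpoly f with hp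
  -- coefficient comparison
  have hcoeff : ∀ i, c ^ i * p.coeff i = c ^ n * p.coeff i := by
    intro i
    have h3 := congrArg (fun q => q.coeff i) h2
    simp only [coeff_comp_C_mul_X] at h3
    rwa [smul_eq_C_mul, coeff_C_mul] at h3
  have hzero : ∀ i, i < n → p.coeff i = 0 := by
    intro i hi
    have hne : c ^ i ≠ c ^ n := by
      intro h
      have h4 := congrArg abs h
      rw [abs_pow, abs_pow] at h4
      exact absurd h4 (ne_of_lt (pow_lt_pow_right₀ hc hi))
    by_contra hco
    exact hne (mul_right_cancel₀ hco (hcoeff i))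
  -- p = X ^ n
  have hmonic : p.Monic := f.charpoly_monic
  have hdeg : p.natDegree = n := f.charpoly_natDegree
  have hpX : p = Polynomial.X ^ n := by
    ext i
    rcases lt_trichotomy i n with h | h | h
    · rw [hzero i h, coeff_X_pow, if_neg h.ne]
    · subst h
      rw [coeff_X_pow, if_pos rfl, ← hdeg]
      exact hmonic
    · rw [coeff_X_pow, if_neg h.ne', p.coeff_eq_zero_of_natDegree_lt (hdeg ▸ h)]
  rw [LinearMap.isNilpotent_iff_charpoly]
  exact hpX
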